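/- Define recursively hypergraphs $H(k,l)$ for positive integers $k,l$, with edge set partitioned into red edges (each of size $k$) and blue edges (each of size $l$): $H(1,l)$ has an $l$-element vertex set, its red edges are all singletons and its unique blue edge is the whole vertex set; $H(k,1)$ has a $k$-element vertex set, its unique red edge is the whole vertex set and its blue edges are all singletons; for $k,l > 1$, $H(k,l)$ is obtained from disjoint copies of $H(k-1,l)$ and $H(k,l-1)$ together with a new root vertex $p$, where the red edges are the red edges of $H(k-1,l)$ each extended by $p$, together with the red edges of $H(k,l-1)$, and the blue edges are the blue edges of $H(k-1,l)$, together with the blue edges of $H(k,l-1)$ each extended by $p$. Then for every 2-coloring of the vertices of $H(k,l)$ with colors red and blue, there is either a red edge all of whose vertices are red, or a blue edge all of whose vertices are blue. -/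

import Mathlib

/-- Data of a two-colored hypergraph: vertex type, red edges, blue edges. -/
structure HData where
  V : Type
  R : Set (Set V)
  B : Set (Set V)

/-- The extension step: build H(k,l) from H(k,l-1) (`prev`) and H(k-1,l) (`left`):
a new root vertex is added to every red edge of H(k-1,l) and every blue edge of
H(k,l-1). -/
def rowStep (prev left : HData) : HData where
  V := left.V ⊕ prev.V ⊕ Unit
  R := {S | ∃ e ∈ left.R, S = (Sum.inl '' e) ∪ {Sum.inr (Sum.inr ())}} ∪
       {S | ∃ e ∈ prev.R, S = (Sum.inr ∘ Sum.inl) '' e}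
  B := {S | ∃ e ∈ left.B, S = Sum.inl '' e} ∪
       {S | ∃ e ∈ prev.B, S = ((Sum.inr ∘ Sum.inl) '' e) ∪ {Sum.inr (Sum.inr ())}}

/-- Row recursion: given the previous row `prevRow` (i.e. j ↦ H(k-1, j+1)),
`hrow prevRow i j` is H(i+2, j+1). -/
def hrow (prevRow : ℕ → HData) (i : ℕ) : ℕ → HData
  | 0 => ⟨Fin (i + 2), {Set.univ}, {S | ∃ v, S = {v}}⟩
  | j + 1 => rowStep (hrow prevRow i j) (prevRow (j + 1))

/-- `Hrec i j` is the hypergraph H(i+1, j+1) of the double recursive construction: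
H(1,l) has l vertices, singleton red edges and the full blue edge; H(k,1) has k
vertices, the full red edge and singleton blue edges; H(k,l) is built from
H(k-1,l) and H(k,l-1) by adding a root as in `rowStep`. -/
def Hrec : ℕ → ℕ → HData
  | 0, j => ⟨Fin (j + 1), {S | ∃ v, S = {v}}, {Set.univ}⟩
  | i + 1, j => hrow (Hrec i) i j


def Good (h : HData) : Prop :=
  ∀ c : h.V → Bool,
    (∃ e ∈ h.R, ∀ v ∈ e, c v = true) ∨ (∃ e ∈ h.B, ∀ v ∈ e, c v = false)

lemma good_rowStep (prev left : HData) (hp : Good prev) (hl : Good left) :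
    Good (rowStep prev left) := by
  intro c
  by_cases hr : c (Sum.inr (Sum.inr ())) = true
  · rcases hl (fun v => c (Sum.inl v)) with ⟨e, he, hall⟩ | ⟨e, he, hall⟩
    · left
      refine ⟨_, Or.inl ⟨e, he, rfl⟩, ?_⟩
      rintro v (⟨x, hx, rfl⟩ | hv)
      · exact hall x hx
      · replace hv : v = Sum.inr (Sum.inr ()) := hv; subst hv; exact hr
    · right
      refine ⟨_, Or.inl ⟨e, he, rfl⟩, ?_⟩
      rintro v ⟨x, hx, rfl⟩
      exact hall x hx
  · rcases hp (fun v => c (Sum.inr (Sum.inl v))) with ⟨e, he, hall⟩ | ⟨e, he, hall⟩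
    · left
      refine ⟨_, Or.inr ⟨e, he, rfl⟩, ?_⟩
      rintro v ⟨x, hx, rfl⟩
      exact hall x hx
    · right
      refine ⟨_, Or.inr ⟨e, he, rfl⟩, ?_⟩
      rintro v (⟨x, hx, rfl⟩ | hv)
      · exact hall x hx
      · replace hv : v = Sum.inr (Sum.inr ()) := hv; subst hv
        simpa using hr

lemma good_base0 (j : ℕ) : Good (Hrec 0 j) := by
  intro c
  by_cases h : ∃ v, c v = true
  · obtain ⟨v, hv⟩ := h
    left
    refine ⟨{v}, ⟨v, rfl⟩, ?_⟩
    intro w hw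
    rw [Set.mem_singleton_iff] at hw; subst hw; exact hv
  · right
    push_neg at h
    exact ⟨Set.univ, rfl, fun v _ => by simpa using h v⟩

lemma good_hrow_base (prevRow : ℕ → HData) (i : ℕ) : Good (hrow prevRow i 0) := by
  intro c
  by_cases h : ∃ v, c v = false
  · obtain ⟨v, hv⟩ := h
    right
    refine ⟨{v}, ⟨v, rfl⟩, ?_⟩
    intro w hw
    rw [Set.mem_singleton_iff] at hw; subst hw; exact hv
  · left
    push_neg at h
    exact ⟨Set.univ, rfl, fun v _ => by simpa using h v⟩

lemma good_all : ∀ i j, Good (Hrec i j) := by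
  intro i
  induction i with
  | zero => exact good_base0
  | succ i ih =>
    intro j
    induction j with
    | zero => exact good_hrow_base (Hrec i) i
    | succ j ihj => exact good_rowStep _ _ ihj (ih (j + 1))

/-- in every red/blue 2-coloring (encoded by `c : V → Bool` with
`true` = red) of the vertices of H(k,l) there is an all-red red edge or an
all-blue blue edge. -/
theorem stmt5 (k l : ℕ) (hk : 0 < k) (hl : 0 < l)
    (c : (Hrec (k - 1) (l - 1)).V → Bool) :
    (∃ e ∈ (Hrec (k - 1) (l - 1)).R, ∀ v ∈ e, c v = true) ∨
    (∃ e ∈ (Hrec (k - 1) (l - 1)).B, ∀ v ∈ e, c v = false) := by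
  exact good_all (k - 1) (l - 1) c
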